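/- Let P, Q > 0 be real numbers with P² − 4Q < 0, and let a : ℕ → ℝ be a sequence satisfying a_{n+2} = P · a_{n+1} − Q · a_n for all n ≥ 1, where a_1 and a_2 are real and not both zero. Then there exists n ≥ 1 such that a_n < 0. -/

import Mathlib

/-- For a second-order linear recurrence `a_{n+2} = P·a_{n+1} − Q·a_n` with
`P, Q > 0` and negative discriminant `P² − 4Q < 0`, whose initial values `a_1, a_2`
are not both zero, some term of the sequence is negative. -/
theorem exists_neg_of_complex_root_recurrence
    (P Q : ℝ) (hP : 0 < P) (hQ : 0 < Q) (hD : P ^ 2 - 4 * Q < 0)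
    (a : ℕ → ℝ)
    (hrec : ∀ n : ℕ, 1 ≤ n → a (n + 2) = P * a (n + 1) - Q * a n)
    (hnz : ¬(a 1 = 0 ∧ a 2 = 0)) :
    ∃ n : ℕ, 1 ≤ n ∧ a n < 0 := by
  by_contra hcon
  push_neg at hcon
  have hnn : ∀ n : ℕ, 0 ≤ a (n + 1) := fun n => hcon (n + 1) (Nat.le_add_left 1 n)
  -- two consecutive zeros propagate back to a 1 = a 2 = 0
  have hz : ∀ n : ℕ, a (n + 1) = 0 → a (n + 2) = 0 → False := by
    intro n
    induction n with
    | zero => intro h1 h2; exact hnz ⟨h1, h2⟩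
    | succ m ih =>
      intro h1 h2
      have hr := hrec (m + 1) (by omega)
      have hm : a (m + 1) = 0 := by
        rw [show m + 1 + 2 = m + 3 from rfl, show m + 1 + 1 = m + 2 from rfl] at hr
        rw [show m + 1 + 1 = m + 2 from rfl] at h1
        rw [show m + 1 + 2 = m + 3 from rfl] at h2
        rw [h1, h2] at hr
        nlinarith
      rw [show m + 1 + 1 = m + 2 from rfl] at h1
      exact ih hm h1
  -- positivity of all terms from index 2 on
  have hpos : ∀ n : ℕ, 0 < a (n + 2) := by
    intro n
    rcases (hnn (n + 1)).lt_or_eq with h | h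
    · exact h
    · exfalso
      have hr := hrec (n + 1) (by omega)
      rw [show n + 1 + 2 = n + 3 from rfl, show n + 1 + 1 = n + 2 from rfl] at hr
      have h3 : a (n + 1) = 0 := by nlinarith [hnn n, hnn (n + 2)]
      exact hz n h3 h.symm
  -- step bound: a (k+3) ≤ P * a (k+2)
  have hstep : ∀ k : ℕ, a (k + 3) ≤ P * a (k + 2) := by
    intro k
    have hr := hrec (k + 1) (by omega)
    rw [show k + 1 + 2 = k + 3 from rfl, show k + 1 + 1 = k + 2 from rfl] at hr
    nlinarith [hnn k]
  set ε : ℝ := (4 * Q - P ^ 2) / (4 * P) with hεdef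
  have hε : 0 < ε := by
    apply div_pos <;> nlinarith
  have hεP : 4 * P * ε = 4 * Q - P ^ 2 := by
    rw [hεdef]
    field_simp
  set r : ℕ → ℝ := fun k => a (k + 3) / a (k + 2) with hrdef
  have hrpos : ∀ k, 0 < r k := fun k => div_pos (hpos (k + 1)) (hpos k)
  have hkey : ∀ k : ℕ, r (k + 1) ≤ r k - ε := by
    intro k
    have hy : 0 < a (k + 3) := hpos (k + 1)
    have hz' : 0 < a (k + 2) := hpos k
    have hyle : a (k + 3) ≤ P * a (k + 2) := hstep k
    have hr := hrec (k + 2) (by omega)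
    rw [show k + 2 + 2 = k + 4 from rfl, show k + 2 + 1 = k + 3 from rfl] at hr
    have : r (k + 1) = a (k + 4) / a (k + 3) := rfl
    rw [this, hrdef]
    rw [show (fun k => a (k + 3) / a (k + 2)) k = a (k + 3) / a (k + 2) from rfl]
    rw [show a (k + 3) / a (k + 2) - ε = (a (k + 3) - ε * a (k + 2)) / a (k + 2) by
      field_simp]
    rw [div_le_div_iff₀ hy hz']
    nlinarith [sq_nonneg (2 * a (k + 3) - P * a (k + 2)), mul_pos hz' hz',
      mul_pos hε hz', mul_le_mul_of_nonneg_left hyle (le_of_lt hε)]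
  have hdec : ∀ k : ℕ, r k ≤ r 0 - k * ε := by
    intro k
    induction k with
    | zero => simp
    | succ m ih =>
      have := hkey m
      push_cast
      linarith
  set N : ℕ := ⌈r 0 / ε⌉₊ + 1 with hN
  have hlt : r 0 / ε < (N : ℝ) := by
    have h1 : r 0 / ε ≤ (⌈r 0 / ε⌉₊ : ℝ) := Nat.le_ceil _
    have h2 : ((⌈r 0 / ε⌉₊ : ℕ) : ℝ) < (N : ℝ) := by
      exact_mod_cast Nat.lt_succ_self _
    linarith
  have : r 0 < N * ε := by
    rw [div_lt_iff₀ hε] at hlt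
    linarith
  have := hdec N
  have := hrpos N
  linarith
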